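/- Suppose the meromorphic potential u(x,y) has Laurent expansion u = −2/(x−x̃(y))^2 + v(y) + w(y)(x−x̃(y)) + … and ψ = α(y)/(x−x̃(y)) + β(y) + γ(y)(x−x̃(y)) + δ(y)(x−x̃(y))^2 + … with α(y) ≠ 0 is a solution of (∂_x^2 + u)ψ = ∂_y ψ. Then matching the coefficients of (x−x̃)^{-2}, (x−x̃)^{-1}, (x−x̃)^0 yields αẋ̃ + 2β = 0, −α̇ + αv − 2γ = 0, −β̇ + γẋ̃ + βv + αw = 0, and these three relations together imply ẍ̃ = −2w (dots denote y-derivatives). -/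

import Mathlib

open scoped BigOperators

/-- Suppose `u = −2/(x−x̃(y))² + v(y) + w(y)(x−x̃(y)) + …` and
`ψ = α/(x−x̃) + β + γ(x−x̃) + δ(x−x̃)² + …` (encoded by their Laurent coefficients
`c, a : ℤ → (ℂ → ℂ)` in powers of `x − x̃(y)`), with `α(y) ≠ 0`, and `ψ` solves
`(∂ₓ² + u)ψ = ∂_yψ`; the equation reads, on the coefficient of `(x−x̃)^t`:
`(t+2)(t+1)a_{t+2} + Σ_i c_i a_{t−i} = ȧ_t − (t+1)a_{t+1}·x̃̇`. Then matching the
coefficients of `(x−x̃)^{-2}, (x−x̃)^{-1}, (x−x̃)^0` yields `αx̃̇ + 2β = 0`,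
`−α̇ + αv − 2γ = 0`, `−β̇ + γx̃̇ + βv + αw = 0`, and these relations imply
`x̃̈ = −2w` (dots denote `y`-derivatives). -/
theorem laurent_matching_flex
    (xt α β γ δ v w : ℂ → ℂ)
    (a c : ℤ → ℂ → ℂ)
    (ha_neg : ∀ t : ℤ, t < -1 → a t = 0)
    (ham1 : a (-1) = α) (ha0 : a 0 = β) (ha1 : a 1 = γ) (ha2 : a 2 = δ)
    (hc_neg : ∀ t : ℤ, t < -2 → c t = 0)
    (hcm2 : c (-2) = fun _ => (-2 : ℂ)) (hcm1 : c (-1) = 0)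
    (hc0 : c 0 = v) (hc1 : c 1 = w)
    (hα : ∀ y, α y ≠ 0)
    (hdα : Differentiable ℂ α) (hdβ : Differentiable ℂ β)
    (hdx : Differentiable ℂ xt) (hdx' : Differentiable ℂ (deriv xt))
    (heq : ∀ (t : ℤ) (y : ℂ),
      ((t + 2 : ℤ) : ℂ) * ((t + 1 : ℤ) : ℂ) * a (t + 2) y
          + (∑ᶠ i : ℤ, c i y * a (t - i) y)
        = deriv (a t) y - ((t + 1 : ℤ) : ℂ) * a (t + 1) y * deriv xt y) :
    (∀ y, α y * deriv xt y + 2 * β y = 0) ∧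
    (∀ y, -deriv α y + α y * v y - 2 * γ y = 0) ∧
    (∀ y, -deriv β y + γ y * deriv xt y + β y * v y + α y * w y = 0) ∧
    (∀ y, deriv (deriv xt) y = -2 * w y) := by

  have hsum : ∀ (t : ℤ) (y : ℂ), (∑ᶠ i : ℤ, c i y * a (t - i) y)
      = ∑ i ∈ Finset.Icc (-2 : ℤ) (t + 1), c i y * a (t - i) y := by
    intro t y
    apply finsum_eq_finset_sum_of_support_subset
    intro i hi
    simp only [Function.mem_support] at hi
    simp only [Finset.coe_Icc, Set.mem_Icc]
    constructor
    · by_contra h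
      push_neg at h
      exact hi (by rw [hc_neg i h]; simp)
    · by_contra h
      push_neg at h
      have : t - i < -1 := by omega
      exact hi (by rw [ha_neg _ this]; simp)
  -- first relation (t = -2)
  have h1 : ∀ y, α y * deriv xt y + 2 * β y = 0 := by
    intro y
    have h := heq (-2) y
    rw [hsum] at h
    have hIcc : Finset.Icc (-2 : ℤ) (-2 + 1) = {-2, -1} := by decide
    rw [hIcc, Finset.sum_insert (by decide), Finset.sum_singleton] at h
    have hz : a (-2) = 0 := ha_neg _ (by norm_num)
    norm_num [hcm2, hcm1, ham1, ha0, hz] at h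
    have hd0 : deriv (0 : ℂ → ℂ) y = 0 := by
      rw [show (0 : ℂ → ℂ) = fun _ => (0 : ℂ) from rfl, deriv_const']
    linear_combination -h
  -- second relation (t = -1)
  have h2 : ∀ y, -deriv α y + α y * v y - 2 * γ y = 0 := by
    intro y
    have h := heq (-1) y
    rw [hsum] at h
    have hIcc : Finset.Icc (-2 : ℤ) (-1 + 1) = {-2, -1, 0} := by decide
    rw [hIcc, Finset.sum_insert (by decide), Finset.sum_insert (by decide),
      Finset.sum_singleton] at h
    norm_num [hcm2, hcm1, hc0, ham1, ha0, ha1] at h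
    linear_combination h
  -- third relation (t = 0)
  have h3 : ∀ y, -deriv β y + γ y * deriv xt y + β y * v y + α y * w y = 0 := by
    intro y
    have h := heq 0 y
    rw [hsum] at h
    have hIcc : Finset.Icc (-2 : ℤ) (0 + 1) = {-2, -1, 0, 1} := by decide
    rw [hIcc, Finset.sum_insert (by decide), Finset.sum_insert (by decide),
      Finset.sum_insert (by decide), Finset.sum_singleton] at h
    norm_num [hcm2, hcm1, hc0, hc1, ham1, ha0, ha1, ha2] at h
    linear_combination h
  refine ⟨h1, h2, h3, ?_⟩
  intro y
  have hβfun : β = fun y => -(α y * deriv xt y) / 2 := by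
    funext z
    linear_combination (h1 z) / 2
  have hdb : deriv β y
      = -(deriv α y * deriv xt y + α y * deriv (deriv xt) y) / 2 := by
    rw [hβfun]
    exact (((hdα y).hasDerivAt.mul (hdx' y).hasDerivAt).neg.div_const 2).deriv
  have key : α y * (deriv (deriv xt) y + 2 * w y) = 0 := by
    linear_combination 2 * h3 y + 2 * hdb + deriv xt y * h2 y - v y * h1 y
  rcases mul_eq_zero.mp key with h | h
  · exact absurd h (hα y)
  · linear_combination h
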